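/- Let V₁, …, V_t be a finite open cover of X such that the restriction of T to each V_i is injective, let v₁, …, v_t : X → [0,1] be a continuous partition of unity subordinate to this cover, and set uᵢ = ((ℒ(1)∘T)·vᵢ)^{1/2}. Then Σ_{i=1}^{t} M̃_{uᵢ} S̃ S̃* M̃_{uᵢ} = 1 as bounded operators on ℓ²(X×ℤ). -/

import Mathlib

open Classical

noncomputable section

/-- `ℓ²(X×ℤ)`: the Hilbert space of square-summable complex families indexed by `X × ℤ`. -/
abbrev l2Z (X : Type*) : Type _ := lp (fun _ : X × ℤ => ℂ) 2

/-- The orthonormal basis vector `e_{(x,n)}` of `ℓ²(X×ℤ)`. -/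
def e {X : Type*} (p : X × ℤ) : l2Z X := lp.single 2 p 1

end

open scoped ComplexInnerProductSpace

open ComplexInnerProductSpace in
theorem inner_e_left' {X : Type*} (q : X × ℤ) (f : l2Z X) : ⟪e q, f⟫ = f q := by
  classical
  rw [e, lp.inner_single_left]
  simp [RCLike.inner_apply]

open ComplexInnerProductSpace in
theorem inner_e_right' {X : Type*} (q : X × ℤ) (f : l2Z X) :
    ⟪f, e q⟫ = (starRingEnd ℂ) (f q) := by
  classical
  rw [e, lp.inner_single_right]
  simp [RCLike.inner_apply]

theorem e_apply' {X : Type*} (p q : X × ℤ) : (e p) q = if q = p then (1:ℂ) else 0 := by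
  rw [e, lp.single_apply]
  split_ifs with h
  · subst h; exact Pi.single_eq_same _ _
  · exact Pi.single_eq_of_ne h _

open ContinuousLinearMap in
theorem clm_ext_of_e {X : Type*} (A B : l2Z X →L[ℂ] l2Z X)
    (h : ∀ p, A (e p) = B (e p)) : A = B := by
  have hadj : ∀ q, adjoint A (e q) = adjoint B (e q) := by
    intro q
    apply lp.ext
    funext r
    rw [← inner_e_left' r, ← inner_e_left' r, adjoint_inner_right, adjoint_inner_right, h]
  ext f q
  rw [← inner_e_left' q, ← inner_e_left' q, ← adjoint_inner_left, ← adjoint_inner_left, hadj]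

open ContinuousLinearMap in
/-- Let `X` be a compact Hausdorff space, `T : X → X` a covering map and
`S̃` the bounded operator on `ℓ²(X×ℤ)` with
`S̃ e_{(x,n)} = (ℒ(1)(x))^{-1/2} ∑_{y ∈ T⁻¹({x})} e_{(y,n+1)}`. Let `V₁, …, V_t` be a
finite open cover of `X` on each member of which `T` is injective, let `v₁, …, v_t` be a
continuous partition of unity subordinate to it, and put `uᵢ = ((ℒ(1)∘T)·vᵢ)^{1/2}`.
Then `∑ᵢ M̃_{uᵢ} S̃ S̃* M̃_{uᵢ} = 1` on `ℓ²(X×ℤ)`. -/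
theorem sum_Mu_St_adjointSt_Mu_eq_one {X : Type*} [TopologicalSpace X] [CompactSpace X]
    [T2Space X] (T : X → X) (hT : IsCoveringMap T) (hTsurj : Function.Surjective T)
    (St : l2Z X →L[ℂ] l2Z X)
    (hSt : ∀ (x : X) (n : ℤ), St (e (x, n)) =
      (((Real.sqrt (Nat.card (T ⁻¹' {x})))⁻¹ : ℝ) : ℂ) • ∑ᶠ y ∈ T ⁻¹' {x}, e (y, n + 1))
    (t : ℕ) (V : Fin t → Set X) (hVopen : ∀ i, IsOpen (V i))
    (hVcover : (⋃ i, V i) = Set.univ) (hVinj : ∀ i, Set.InjOn T (V i))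
    (v : Fin t → C(X, ℝ)) (hv01 : ∀ i x, v i x ∈ Set.Icc (0 : ℝ) 1)
    (hvsum : ∀ x : X, ∑ i, v i x = 1) (hvsupp : ∀ i, tsupport (v i) ⊆ V i)
    (Mu : Fin t → (l2Z X →L[ℂ] l2Z X))
    (hMu : ∀ i (p : X × ℤ), Mu i (e p) =
      ((Real.sqrt ((Nat.card (T ⁻¹' {T p.1}) : ℝ) * v i p.1) : ℝ) : ℂ) • e p) :
    ∑ i, Mu i ∘L St ∘L (adjoint St) ∘L Mu i = 1 := by
  classical
  have hfin : ∀ x : X, (T ⁻¹' {x}).Finite := fun x =>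
    ((isClosed_singleton.preimage hT.continuous).isCompact).finite (isDiscrete_iff_discreteTopology.mpr (hT x).1)
  have hne : ∀ x : X, (T ⁻¹' {x}).Nonempty := fun x => hTsurj x
  have hNpos : ∀ x : X, 0 < (Nat.card (T ⁻¹' {x}) : ℝ) := by
    intro x
    have : 0 < Nat.card (T ⁻¹' {x}) := by
      haveI : Finite (T ⁻¹' {x}) := (hfin x).to_subtype
      haveI : Nonempty (T ⁻¹' {x}) := (hne x).to_subtype
      exact Nat.card_pos
    exact_mod_cast this
  have hStF : ∀ (x : X) (n : ℤ), St (e (x, n)) =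
      (((Real.sqrt (Nat.card (T ⁻¹' {x})))⁻¹ : ℝ) : ℂ) •
        ∑ y ∈ (hfin x).toFinset, e (y, n + 1) := by
    intro x n
    rw [hSt x n]
    congr 1
    rw [← finsum_mem_coe_finset, (hfin x).coe_toFinset]
  have hStval : ∀ (y : X) (m : ℤ) (q : X × ℤ), (St (e (y, m))) q =
      if T q.1 = y ∧ q.2 = m + 1 then (((Real.sqrt (Nat.card (T ⁻¹' {y})))⁻¹ : ℝ) : ℂ) else 0 := by
    intro y m q
    rw [hStF y m, lp.coeFn_smul, Pi.smul_apply, lp.coeFn_sum, Finset.sum_apply]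
    have : ∀ z ∈ (hfin y).toFinset, (e (z, m+1)) q = if q = (z, m+1) then (1:ℂ) else 0 :=
      fun z _ => e_apply' _ _
    rw [Finset.sum_congr rfl this]
    obtain ⟨a, b⟩ := q
    by_cases hb : b = m + 1
    · subst hb
      simp only [Prod.mk.injEq, and_true, smul_eq_mul, Finset.mul_sum, mul_ite, mul_one, mul_zero]
      rw [Finset.sum_ite_eq]
      simp [(hfin y).mem_toFinset]
    · simp [Prod.mk.injEq, hb]
  have hadj : ∀ (x : X) (n : ℤ), ContinuousLinearMap.adjoint St (e (x, n)) =
      (((Real.sqrt (Nat.card (T ⁻¹' {T x})))⁻¹ : ℝ) : ℂ) • e (T x, n - 1) := by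
    intro x n
    apply lp.ext
    funext q
    obtain ⟨y, m⟩ := q
    have h1 : (ContinuousLinearMap.adjoint St (e (x, n))) (y, m) = ⟪St (e (y, m)), e (x, n)⟫ := by
      rw [← inner_e_left' (y, m), ContinuousLinearMap.adjoint_inner_right]
    rw [h1, inner_e_right' , hStval, lp.coeFn_smul, Pi.smul_apply, e_apply']
    dsimp only
    by_cases h : (y, m) = (T x, n - 1)
    · rw [Prod.mk.injEq] at h
      obtain ⟨rfl, rfl⟩ := h
      rw [if_pos ⟨rfl, by omega⟩, if_pos rfl]
      simp [Complex.conj_ofReal]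
    · have hc : ¬(T x = y ∧ n = m + 1) := by
        rintro ⟨h2, h3⟩
        exact h (by rw [Prod.mk.injEq]; exact ⟨h2.symm, by omega⟩)
      rw [if_neg hc, if_neg h]
      simp
  apply clm_ext_of_e
  intro p
  obtain ⟨x, n⟩ := p
  rw [ContinuousLinearMap.one_apply, ContinuousLinearMap.sum_apply]
  have hn1 : n - 1 + 1 = n := by omega
  have step : ∀ i, (Mu i ∘L St ∘L adjoint St ∘L Mu i) (e (x, n)) =
      ∑ y ∈ (hfin (T x)).toFinset,
        ((Real.sqrt ((Nat.card (T ⁻¹' {T x}) : ℝ) * v i x) *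
            ((Real.sqrt ((Nat.card (T ⁻¹' {T x}) : ℝ)))⁻¹ *
              ((Real.sqrt ((Nat.card (T ⁻¹' {T x}) : ℝ)))⁻¹ *
                Real.sqrt ((Nat.card (T ⁻¹' {T y}) : ℝ) * v i y)))) : ℂ) • e (y, n - 1 + 1) := by
    intro i
    rw [comp_apply, comp_apply, comp_apply, hMu i (x, n)]
    simp only [map_smul, hadj x n, hStF (T x) (n - 1), map_sum, Finset.smul_sum]
    refine Finset.sum_congr rfl fun y hy => ?_
    rw [hMu i (y, n - 1 + 1)]
    simp only [smul_smul]
    all_goals (congr 1; push_cast; ring)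
  rw [Finset.sum_congr rfl fun i _ => step i, Finset.sum_comm]
  simp only [hn1]
  have hcoef : ∀ y ∈ (hfin (T x)).toFinset,
      (∑ i, ((Real.sqrt ((Nat.card (T ⁻¹' {T x}) : ℝ) * v i x) *
            ((Real.sqrt ((Nat.card (T ⁻¹' {T x}) : ℝ)))⁻¹ *
              ((Real.sqrt ((Nat.card (T ⁻¹' {T x}) : ℝ)))⁻¹ *
                Real.sqrt ((Nat.card (T ⁻¹' {T y}) : ℝ) * v i y)))) : ℂ)) =
        if y = x then (1 : ℂ) else 0 := by
    intro y hy
    have hTy : T y = T x := by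
      simpa [(hfin (T x)).mem_toFinset] using hy
    rw [hTy]
    set N : ℝ := (Nat.card (T ⁻¹' {T x}) : ℝ) with hNdef
    have hN : 0 < N := hNpos (T x)
    have hrs : ∀ i : Fin t,
        Real.sqrt (N * v i x) * ((Real.sqrt N)⁻¹ * ((Real.sqrt N)⁻¹ * Real.sqrt (N * v i y)))
          = (Real.sqrt N)⁻¹ * (Real.sqrt N)⁻¹ * (Real.sqrt (N * v i x) * Real.sqrt (N * v i y)) :=
      fun i => by ring
    have hsum : ∑ i, Real.sqrt (N * v i x) * Real.sqrt (N * v i y)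
        = if y = x then N else 0 := by
      by_cases hyx : y = x
      · subst hyx
        rw [if_pos rfl]
        have : ∀ i : Fin t, Real.sqrt (N * v i y) * Real.sqrt (N * v i y) = N * v i y :=
          fun i => Real.mul_self_sqrt (mul_nonneg hN.le (hv01 i y).1)
        rw [Finset.sum_congr rfl fun i _ => this i, ← Finset.mul_sum, hvsum, mul_one]
      · rw [if_neg hyx]
        refine Finset.sum_eq_zero fun i _ => ?_
        by_cases hx0 : v i x = 0
        · rw [hx0, mul_zero, Real.sqrt_zero, zero_mul]
        · have hy0 : v i y = 0 := by
            by_contra hy0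
            have hxV : x ∈ V i := hvsupp i (subset_tsupport _ hx0)
            have hyV : y ∈ V i := hvsupp i (subset_tsupport _ hy0)
            exact hyx (hVinj i hyV hxV hTy)
          rw [hy0, mul_zero, Real.sqrt_zero, mul_zero]
    have hreal : ∑ i, Real.sqrt (N * v i x) *
        ((Real.sqrt N)⁻¹ * ((Real.sqrt N)⁻¹ * Real.sqrt (N * v i y)))
          = if y = x then (1 : ℝ) else 0 := by
      rw [Finset.sum_congr rfl fun i _ => hrs i, ← Finset.mul_sum, hsum]
      by_cases hyx : y = x
      · rw [if_pos hyx, if_pos hyx]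
        rw [← mul_inv, Real.mul_self_sqrt hN.le]
        exact inv_mul_cancel₀ hN.ne'
      · rw [if_neg hyx, if_neg hyx, mul_zero]
    calc (∑ i, ((Real.sqrt (N * v i x) *
            ((Real.sqrt N)⁻¹ * ((Real.sqrt N)⁻¹ * Real.sqrt (N * v i y)))) : ℂ))
        = ((∑ i, Real.sqrt (N * v i x) *
            ((Real.sqrt N)⁻¹ * ((Real.sqrt N)⁻¹ * Real.sqrt (N * v i y))) : ℝ) : ℂ) := by
          push_cast; ring
      _ = if y = x then (1 : ℂ) else 0 := by
          rw [hreal]; split_ifs <;> simp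
  rw [Finset.sum_congr rfl fun y hy => by
    rw [← Finset.sum_smul, hcoef y hy]]
  simp only [ite_smul, one_smul, zero_smul]
  rw [Finset.sum_ite_eq']
  rw [if_pos ((hfin (T x)).mem_toFinset.mpr rfl)]
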